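/- Let γ₀, γ₁ be two paths in the open Möbius strip M, each lifting to a path in the orientation double cover C connecting a point to its image under the nontrivial deck transformation (i.e., each γᵢ is an orientation-reversing loop). Then the images of γ₀ and γ₁ in M must intersect. -/

import Mathlib

noncomputable section

/-- The unit 2-sphere in `ℝ³`. -/
abbrev Sphere2 : Set (EuclideanSpace ℝ (Fin 3)) := Metric.sphere 0 1

/-- The antipodal map on the 2-sphere. -/
def antipodal (x : Sphere2) : Sphere2 :=
  ⟨-x.1, by
    rw [mem_sphere_zero_iff_norm, norm_neg]
    exact mem_sphere_zero_iff_norm.mp x.2⟩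

/-- The real projective plane, as the quotient of the sphere by the antipodal map. -/
abbrev RealProjectivePlane : Type := Quot (fun x y : Sphere2 => y = antipodal x)

/-- The covering projection from the sphere to the projective plane. -/
def sphereProj : Sphere2 → RealProjectivePlane := Quot.mk _

/-- The unit circle in the plane. -/
abbrev Circle2 : Set (EuclideanSpace ℝ (Fin 2)) := Metric.sphere 0 1

/-- The open unit disk in the plane. -/
abbrev OpenDisk : Set (EuclideanSpace ℝ (Fin 2)) := Metric.ball 0 1

/-- An open annulus in the plane. -/
abbrev OpenAnnulus : Set (EuclideanSpace ℝ (Fin 2)) := {x | ‖x‖ ∈ Set.Ioo (1:ℝ) 2}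

/-- A set is a simple closed curve if it is homeomorphic to the circle. -/
def IsSimpleClosedCurve {X : Type*} [TopologicalSpace X] (C : Set X) : Prop :=
  Nonempty (C ≃ₜ Circle2)

/-- The strip `ℝ × (-1,1)`. -/
abbrev MobiusDom : Type := {p : ℝ × ℝ // p.2 ∈ Set.Ioo (-1:ℝ) 1}

/-- The generating relation `(x, y) ∼ (x + 1, -y)` for the open Möbius strip. -/
def mobiusRel (p q : MobiusDom) : Prop := q.1.1 = p.1.1 + 1 ∧ q.1.2 = -p.1.2

/-- The open Möbius strip: the quotient of `ℝ × (-1,1)` by `(x,y) ∼ (x+1,-y)`. -/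
abbrev OpenMobius : Type := Quot mobiusRel

/-- The generating relation `(x, y) ∼ (x + 2, y)` for the open cylinder. -/
def cylinderRel (p q : MobiusDom) : Prop := q.1.1 = p.1.1 + 2 ∧ q.1.2 = p.1.2

/-- The open cylinder: the quotient of `ℝ × (-1,1)` by `(x,y) ∼ (x+2,y)`. -/
abbrev OpenCylinder : Type := Quot cylinderRel

/-- The orientation double covering of the open Möbius strip by the open cylinder. -/
def mobiusCover : OpenCylinder → OpenMobius :=
  Quot.lift (fun p => Quot.mk mobiusRel p) (by
    rintro p q ⟨h1, h2⟩
    have hmid : (-p.1.2) ∈ Set.Ioo (-1:ℝ) 1 := by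
      obtain ⟨ha, hb⟩ := p.2; constructor <;> linarith
    have s1 : Quot.mk mobiusRel p = Quot.mk mobiusRel ⟨(p.1.1 + 1, -p.1.2), hmid⟩ :=
      Quot.sound ⟨rfl, rfl⟩
    have s2 : Quot.mk mobiusRel ⟨(p.1.1 + 1, -p.1.2), hmid⟩ = Quot.mk mobiusRel q := by
      apply Quot.sound
      constructor
      · simpa [h1] using by ring
      · simp [h2]
    exact s1.trans s2)

/-- The nontrivial deck transformation of the covering `mobiusCover`,
induced by `(x, y) ↦ (x + 1, -y)`. -/
def mobiusDeck : OpenCylinder → OpenCylinder :=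
  Quot.lift
    (fun p => Quot.mk cylinderRel
      ⟨(p.1.1 + 1, -p.1.2), by obtain ⟨ha, hb⟩ := p.2; constructor <;> dsimp <;> linarith⟩)
    (by
      rintro p q ⟨h1, h2⟩
      apply Quot.sound
      constructor
      · simpa [h1] using by ring
      · simp [h2])

/-- A 2-manifold (an open subset of a surface) is *orientable* if it contains no
homeomorphic copy of the open Möbius strip. -/
def Orientable (X : Type*) [TopologicalSpace X] : Prop :=
  ¬ ∃ A : Set X, Nonempty (A ≃ₜ OpenMobius)

end

namespace MB

open Complex Set

noncomputable section

def ρ (t : ℝ) : ℝ := max 0 (min t 1)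

lemma ρ_mem (t : ℝ) : ρ t ∈ Set.Icc (0:ℝ) 1 :=
  ⟨le_max_left _ _, max_le (by norm_num) (min_le_right _ _)⟩

lemma ρ_eq {t : ℝ} (ht : t ∈ Set.Icc (0:ℝ) 1) : ρ t = t := by
  simp [ρ, min_eq_left ht.2, max_eq_right ht.1]

lemma ρ_cont : Continuous ρ := continuous_const.max (continuous_id.min continuous_const)

lemma ρ_ρ (t : ℝ) : ρ (ρ t) = ρ t := ρ_eq (ρ_mem t)

lemma ρ_zero : ρ 0 = 0 := ρ_eq ⟨le_refl _, by norm_num⟩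
lemma ρ_one : ρ 1 = 1 := ρ_eq ⟨by norm_num, le_refl _⟩

lemma min_lip (s a b : ℝ) : |min s a - min s b| ≤ |a - b| :=
  le_trans (abs_min_sub_min_le_max s a s b) (by simpa using abs_nonneg (a - b))

lemma ρ_lip (a b : ℝ) : |ρ a - ρ b| ≤ |a - b| := by
  have h1 : |ρ a - ρ b| ≤ |min a 1 - min b 1| := by
    rw [ρ, ρ, max_comm (0:ℝ) _, max_comm (0:ℝ) _]
    exact abs_max_sub_max_le_abs _ _ 0
  refine h1.trans ?_
  calc |min a 1 - min b 1| = |min 1 a - min 1 b| := by rw [min_comm a 1, min_comm b 1]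
  _ ≤ |a - b| := min_lip 1 a b

def eC (p : MobiusDom) : ℂ := (2 + (p.1.2 : ℂ)) * Complex.exp ((p.1.1 : ℂ) * Real.pi * Complex.I)

lemma eC_resp (p q : MobiusDom) (h : cylinderRel p q) : eC p = eC q := by
  obtain ⟨h1, h2⟩ := h
  unfold eC
  rw [h1, h2]
  have : ((p.1.1 + 2 : ℝ) : ℂ) * Real.pi * Complex.I
      = (p.1.1 : ℂ) * Real.pi * Complex.I + 2 * Real.pi * Complex.I := by push_cast; ring
  rw [this, Complex.exp_add, Complex.exp_two_pi_mul_I, mul_one]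

def eCyl : OpenCylinder → ℂ := Quot.lift eC eC_resp

lemma eC_cont : Continuous eC := by
  apply Continuous.mul
  · exact continuous_const.add (Complex.continuous_ofReal.comp
      (continuous_snd.comp continuous_subtype_val))
  · exact Complex.continuous_exp.comp (((Complex.continuous_ofReal.comp
      (continuous_fst.comp continuous_subtype_val)).mul continuous_const).mul continuous_const)

lemma eCyl_cont : Continuous eCyl := continuous_quot_lift _ eC_cont

lemma two_add_pos (p : MobiusDom) : (0:ℝ) < 2 + p.1.2 := by
  have := p.2.1; linarith

lemma eC_abs (p : MobiusDom) : ‖eC p‖ = 2 + p.1.2 := by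
  unfold eC
  rw [norm_mul, Complex.norm_exp]
  have h1 : ((p.1.1 : ℂ) * Real.pi * Complex.I).re = 0 := by simp
  rw [h1, Real.exp_zero, mul_one]
  have h2 : (2 + (p.1.2 : ℂ)) = ((2 + p.1.2 : ℝ) : ℂ) := by push_cast; ring
  rw [h2, Complex.norm_real, Real.norm_of_nonneg (two_add_pos p).le]

lemma eC_ne (p : MobiusDom) : eC p ≠ 0 := by
  intro h
  have := eC_abs p
  rw [h, norm_zero] at this
  exact absurd this.symm (ne_of_gt (two_add_pos p))

lemma piI_ne : ((Real.pi : ℂ)) * Complex.I ≠ 0 :=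
  mul_ne_zero (Complex.ofReal_ne_zero.mpr Real.pi_ne_zero) Complex.I_ne_zero

lemma cyl_sound (k : ℤ) : ∀ (x y : ℝ) (hy : y ∈ Set.Ioo (-1:ℝ) 1)
    (hy2 : y ∈ Set.Ioo (-1:ℝ) 1),
    Quot.mk cylinderRel ⟨(x + 2*k, y), hy2⟩ = Quot.mk cylinderRel ⟨(x, y), hy⟩ := by
  induction k using Int.induction_on with
  | zero => intro x y hy hy2; exact congrArg _ (Subtype.ext (Prod.ext (by push_cast; ring) rfl))
  | succ k ih =>
    intro x y hy hy2
    trans (Quot.mk cylinderRel ⟨((x+2) + 2*(k:ℤ), y), hy2⟩)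
    · exact congrArg _ (Subtype.ext (Prod.ext (by push_cast; ring) rfl))
    · exact (ih (x+2) y hy hy2).trans (Quot.sound ⟨by ring, rfl⟩).symm
  | pred k ih =>
    intro x y hy hy2
    trans (Quot.mk cylinderRel ⟨((x-2) + 2*((-(k:ℤ) : ℤ) : ℝ), y), hy2⟩)
    · exact congrArg _ (Subtype.ext (Prod.ext (by push_cast; ring) rfl))
    · exact (ih (x-2) y hy hy2).trans (Quot.sound ⟨by ring, rfl⟩)

lemma eC_exact (p q : MobiusDom) (h : eC p = eC q) :
    q.1.2 = p.1.2 ∧ ∃ k : ℤ, q.1.1 = p.1.1 + 2*k := by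
  have habs : (2 : ℝ) + p.1.2 = 2 + q.1.2 := by
    rw [← eC_abs p, ← eC_abs q, h]
  have hy : q.1.2 = p.1.2 := by linarith
  refine ⟨hy, ?_⟩
  unfold eC at h
  rw [hy] at h
  have hne : (2 + (p.1.2 : ℂ)) ≠ 0 := by
    intro h0
    have : (2 + p.1.2 : ℝ) = 0 := by exact_mod_cast h0
    linarith [two_add_pos p]
  have hexp : Complex.exp ((p.1.1 : ℂ) * Real.pi * Complex.I)
      = Complex.exp ((q.1.1 : ℂ) * Real.pi * Complex.I) := mul_left_cancel₀ hne h
  rw [Complex.exp_eq_exp_iff_exists_int] at hexp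
  obtain ⟨n, hn⟩ := hexp
  have h2 : ((p.1.1 : ℝ) : ℂ) * (Real.pi * Complex.I)
      = ((q.1.1 + 2*n : ℝ) : ℂ) * (Real.pi * Complex.I) := by
    push_cast
    linear_combination hn
  have h3 := mul_right_cancel₀ piI_ne h2
  have h4 : (p.1.1 : ℝ) = q.1.1 + 2*n := by exact_mod_cast h3
  exact ⟨-n, by push_cast; linarith⟩

lemma cyl_exact {p q : MobiusDom} (h : Quot.mk cylinderRel p = Quot.mk cylinderRel q) :
    q.1.2 = p.1.2 ∧ ∃ k : ℤ, q.1.1 = p.1.1 + 2*k :=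
  eC_exact p q (congrArg eCyl h)

lemma eC_inj {p q : MobiusDom} (h : eC p = eC q) :
    Quot.mk cylinderRel p = Quot.mk cylinderRel q := by
  obtain ⟨hy, k, hx⟩ := eC_exact p q h
  have : q = ⟨(p.1.1 + 2*k, p.1.2), by rw [← hy]; exact q.2⟩ := by
    apply Subtype.ext; apply Prod.ext
    · exact hx
    · exact hy
  rw [this, cyl_sound k p.1.1 p.1.2 p.2 _]

def eM (p : MobiusDom) : ℂ × ℂ :=
  (Complex.exp ((p.1.1 : ℂ) * (2 * Real.pi) * Complex.I),
   (p.1.2 : ℂ) * Complex.exp ((p.1.1 : ℂ) * Real.pi * Complex.I))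

lemma eM_resp (p q : MobiusDom) (h : mobiusRel p q) : eM p = eM q := by
  obtain ⟨h1, h2⟩ := h
  unfold eM
  rw [h1, h2]
  refine Prod.ext ?_ ?_
  · show Complex.exp _ = Complex.exp _
    have : ((p.1.1 + 1 : ℝ) : ℂ) * (2 * Real.pi) * Complex.I
        = (p.1.1 : ℂ) * (2 * Real.pi) * Complex.I + 2 * Real.pi * Complex.I := by
      push_cast; ring
    rw [this, Complex.exp_add, Complex.exp_two_pi_mul_I, mul_one]
  · show (p.1.2 : ℂ) * _ = ((-p.1.2 : ℝ) : ℂ) * _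
    have : ((p.1.1 + 1 : ℝ) : ℂ) * Real.pi * Complex.I
        = (p.1.1 : ℂ) * Real.pi * Complex.I + Real.pi * Complex.I := by
      push_cast; ring
    rw [this, Complex.exp_add, Complex.exp_pi_mul_I]
    push_cast
    ring

def eMob : OpenMobius → ℂ × ℂ := Quot.lift eM eM_resp

lemma neg_one_zpow_mem {y : ℝ} (n : ℤ) (hy : y ∈ Set.Ioo (-1:ℝ) 1) :
    ((-1:ℝ))^n * y ∈ Set.Ioo (-1:ℝ) 1 := by
  rcases Int.even_or_odd n with he | ho
  · rw [he.neg_one_zpow, one_mul]; exact hy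
  · rw [ho.neg_one_zpow]
    constructor
    · have := hy.2; linarith
    · have := hy.1; linarith

lemma mob_sound (n : ℤ) : ∀ (x y : ℝ) (hy : y ∈ Set.Ioo (-1:ℝ) 1)
    (hy2 : ((-1:ℝ))^n * y ∈ Set.Ioo (-1:ℝ) 1),
    Quot.mk mobiusRel ⟨(x + n, ((-1:ℝ))^n * y), hy2⟩ = Quot.mk mobiusRel ⟨(x, y), hy⟩ := by
  induction n using Int.induction_on with
  | zero =>
    intro x y hy hy2
    exact congrArg _ (Subtype.ext (Prod.ext (by push_cast; ring) (by norm_num)))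
  | succ k ih =>
    intro x y hy hy2
    have hyneg : -y ∈ Set.Ioo (-1:ℝ) 1 := by
      constructor
      · have := hy.2; linarith
      · have := hy.1; linarith
    have hy2' : ((-1:ℝ))^(k:ℤ) * (-y) ∈ Set.Ioo (-1:ℝ) 1 := neg_one_zpow_mem _ hyneg
    trans (Quot.mk mobiusRel ⟨((x+1) + (k:ℤ), ((-1:ℝ))^(k:ℤ) * (-y)), hy2'⟩)
    · refine congrArg _ (Subtype.ext (Prod.ext (by push_cast; ring) ?_))
      show ((-1:ℝ))^((k:ℤ)+1) * y = ((-1:ℝ))^(k:ℤ) * (-y)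
      rw [zpow_add_one₀ (by norm_num : (-1:ℝ) ≠ 0)]
      ring
    · refine (ih (x+1) (-y) hyneg hy2').trans ?_
      exact (Quot.sound ⟨rfl, rfl⟩).symm
  | pred k ih =>
    intro x y hy hy2
    have hyneg : -y ∈ Set.Ioo (-1:ℝ) 1 := by
      constructor
      · have := hy.2; linarith
      · have := hy.1; linarith
    have hy2' : ((-1:ℝ))^(-(k:ℤ) : ℤ) * (-y) ∈ Set.Ioo (-1:ℝ) 1 := neg_one_zpow_mem _ hyneg
    trans (Quot.mk mobiusRel ⟨((x-1) + ((-(k:ℤ) : ℤ) : ℝ), ((-1:ℝ))^(-(k:ℤ) : ℤ) * (-y)), hy2'⟩)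
    · refine congrArg _ (Subtype.ext (Prod.ext (by push_cast; ring) ?_))
      show ((-1:ℝ))^(-(k:ℤ)-1) * y = ((-1:ℝ))^(-(k:ℤ) : ℤ) * (-y)
      rw [show (-(k:ℤ)-1 : ℤ) = (-(k:ℤ) : ℤ) + (-1) by ring,
        zpow_add₀ (by norm_num : (-1:ℝ) ≠ 0)]
      rw [show ((-1:ℝ))^(-1 : ℤ) = -1 by norm_num]
      ring
    · refine (ih (x-1) (-y) hyneg hy2').trans ?_
      refine Quot.sound ⟨by ring, by ring⟩

lemma mob_exact {p q : MobiusDom} (h : Quot.mk mobiusRel p = Quot.mk mobiusRel q) :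
    ∃ n : ℤ, q.1.1 = p.1.1 + n ∧ q.1.2 = ((-1:ℝ))^n * p.1.2 := by
  have hm : eM p = eM q := congrArg eMob h
  have h1 := congrArg Prod.fst hm
  have h2 := congrArg Prod.snd hm
  simp only [eM] at h1 h2
  rw [Complex.exp_eq_exp_iff_exists_int] at h1
  obtain ⟨n, hn⟩ := h1
  have hx : (p.1.1 : ℝ) = q.1.1 + n := by
    have h2' : ((p.1.1 : ℝ) : ℂ) * (2 * Real.pi * Complex.I)
        = ((q.1.1 + n : ℝ) : ℂ) * (2 * Real.pi * Complex.I) := by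
      push_cast
      linear_combination hn
    have h3 := mul_right_cancel₀
      (mul_ne_zero (mul_ne_zero two_ne_zero (Complex.ofReal_ne_zero.mpr Real.pi_ne_zero))
        Complex.I_ne_zero) h2'
    exact_mod_cast h3
  refine ⟨-n, by push_cast; linarith, ?_⟩
  -- q.1.2 = (-1)^(-n) * p.1.2
  have hqx : ((q.1.1 : ℝ) : ℂ) * Real.pi * Complex.I
      = (p.1.1 : ℂ) * Real.pi * Complex.I + ((-n : ℤ) : ℂ) * (Real.pi * Complex.I) := by
    push_cast
    rw [show (p.1.1 : ℂ) = ((q.1.1 : ℝ) : ℂ) + (n : ℂ) by exact_mod_cast congrArg Complex.ofReal hx]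
    ring
  rw [hqx, Complex.exp_add] at h2
  have hE : Complex.exp ((p.1.1 : ℂ) * Real.pi * Complex.I) ≠ 0 := Complex.exp_ne_zero _
  have hpow : Complex.exp (((-n : ℤ) : ℂ) * (Real.pi * Complex.I)) = ((-1 : ℂ))^(-n : ℤ) := by
    rw [Complex.exp_int_mul, Complex.exp_pi_mul_I]
  rw [hpow] at h2
  rcases Int.even_or_odd (-n : ℤ) with he | ho
  · rw [he.neg_one_zpow, mul_one] at h2
    have h6 : (p.1.2 : ℂ) = (q.1.2 : ℂ) := mul_right_cancel₀ hE h2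
    have h7 : p.1.2 = q.1.2 := by exact_mod_cast h6
    rw [← h7, he.neg_one_zpow, one_mul]
  · rw [ho.neg_one_zpow] at h2
    have h5 : (-(q.1.2 : ℂ)) * Complex.exp ((p.1.1 : ℂ) * Real.pi * Complex.I)
        = (p.1.2 : ℂ) * Complex.exp ((p.1.1 : ℂ) * Real.pi * Complex.I) := by
      linear_combination -h2
    have h6 : (-(q.1.2 : ℂ)) = (p.1.2 : ℂ) := mul_right_cancel₀ hE h5
    have h7 : -q.1.2 = p.1.2 := by exact_mod_cast h6
    rw [ho.neg_one_zpow]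
    linarith

lemma prod_ratio (f : ℕ → ℂ) (hf : ∀ j, f j ≠ 0) :
    ∀ n, ∏ j ∈ Finset.range n, (f (j+1) / f j) = f n / f 0 := by
  intro n
  induction n with
  | zero => simp [div_self (hf 0)]
  | succ n ih =>
    rw [Finset.prod_range_succ, ih, div_mul_div_comm,
      div_eq_div_iff (mul_ne_zero (hf 0) (hf n)) (hf 0)]
    ring

lemma lift_sq (W : ℝ → ℝ → ℂ) (hW : Continuous fun p : ℝ × ℝ => W p.1 p.2)
    (hW0 : ∀ t s, W t s ≠ 0) (hfac : ∀ t s, W t s = W (ρ t) (ρ s))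
    (L₀ : ℝ → ℂ) (hL₀ : Continuous L₀) (hL₀e : ∀ t, Complex.exp (L₀ t) = W t 0) :
    ∃ L : ℝ → ℝ → ℂ, Continuous (fun p : ℝ × ℝ => L p.1 p.2) ∧
      ∀ t, ∀ s ∈ Set.Icc (0:ℝ) 1, Complex.exp (L t s) = W t s := by
  have hK : IsCompact (Set.Icc (0:ℝ) 1 ×ˢ Set.Icc (0:ℝ) 1) := isCompact_Icc.prod isCompact_Icc
  obtain ⟨p₀, hp₀, hmin⟩ := hK.exists_isMinOn
    ⟨(0,0), by constructor <;> constructor <;> norm_num⟩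
    ((continuous_norm.comp hW).continuousOn)
  set m := ‖W p₀.1 p₀.2‖ with hm
  have hm0 : 0 < m := by
    rw [hm]
    exact norm_pos_iff.mpr (hW0 _ _)
  have hmle : ∀ t s, m ≤ ‖W t s‖ := by
    intro t s
    have h1 := hmin (show ((ρ t, ρ s) : ℝ × ℝ) ∈ _ from Set.mk_mem_prod (ρ_mem t) (ρ_mem s))
    rw [hfac t s]
    exact h1
  obtain ⟨δ, hδ0, hδ⟩ := Metric.uniformContinuousOn_iff.mp
    (hK.uniformContinuousOn_of_continuous hW.continuousOn) m hm0
  obtain ⟨n₀, hn₀⟩ := exists_nat_gt (1/δ)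
  set n : ℕ := n₀ + 1 with hn
  have hnpos : 0 < (n:ℝ) := by positivity
  have hstep : (1:ℝ)/n < δ := by
    rw [div_lt_iff₀ hnpos]
    rw [div_lt_iff₀ hδ0] at hn₀
    have : (n₀ : ℝ) ≤ n := by exact_mod_cast Nat.le_succ n₀
    nlinarith
  have key : ∀ t s s' : ℝ, |s - s'| ≤ 1/n → ‖W t s - W t s'‖ < m := by
    intro t s s' h
    rw [hfac t s, hfac t s']
    have hd : dist ((ρ t, ρ s) : ℝ × ℝ) ((ρ t, ρ s') : ℝ × ℝ) < δ := by
      rw [Prod.dist_eq]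
      apply max_lt
      · simpa using hδ0
      · calc dist (ρ s) (ρ s') ≤ |s - s'| := by rw [Real.dist_eq]; exact ρ_lip s s'
        _ ≤ 1/n := h
        _ < δ := hstep
    have := hδ (ρ t, ρ s) (Set.mk_mem_prod (ρ_mem t) (ρ_mem s))
      (ρ t, ρ s') (Set.mk_mem_prod (ρ_mem t) (ρ_mem s')) hd
    rwa [Complex.dist_eq] at this
  set Q : ℕ → ℝ × ℝ → ℂ := fun j p =>
    W p.1 (min p.2 (((j:ℝ)+1)/n)) / W p.1 (min p.2 ((j:ℝ)/n)) with hQ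
  have hQsub : ∀ j p, ‖Q j p - 1‖ < 1 := by
    intro j p
    rw [hQ]
    simp only
    rw [div_sub_one (hW0 _ _), norm_div]
    rw [div_lt_one (norm_pos_iff.mpr (hW0 _ _))]
    refine lt_of_lt_of_le ?_ (hmle _ _)
    apply key
    have h1 : |(((j:ℝ)+1)/n) - ((j:ℝ)/n)| = 1/n := by
      rw [div_sub_div_same]
      rw [abs_of_pos]
      · congr 1; ring
      · rw [show (j:ℝ) + 1 - j = 1 by ring]; positivity
    calc |min p.2 (((j:ℝ)+1)/n) - min p.2 ((j:ℝ)/n)| ≤ |(((j:ℝ)+1)/n) - ((j:ℝ)/n)| :=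
          min_lip _ _ _
    _ = 1/n := h1
  have hQslit : ∀ j p, Q j p ∈ Complex.slitPlane := by
    intro j p
    have := hQsub j p
    have h2 : Q j p ∈ Metric.ball (1:ℂ) 1 := by
      rw [Metric.mem_ball, Complex.dist_eq]
      exact this
    exact Complex.ball_one_subset_slitPlane h2
  have hQne : ∀ j p, Q j p ≠ 0 := fun j p => Complex.slitPlane_ne_zero (hQslit j p)
  have hQcont : ∀ j, Continuous (Q j) := by
    intro j
    apply Continuous.div
    · exact hW.comp (continuous_fst.prodMk (continuous_snd.min continuous_const))
    · exact hW.comp (continuous_fst.prodMk (continuous_snd.min continuous_const))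
    · exact fun p => hW0 _ _
  refine ⟨fun t s => L₀ t + ∑ j ∈ Finset.range n, Complex.log (Q j (t, s)), ?_, ?_⟩
  · apply Continuous.add
    · exact hL₀.comp continuous_fst
    · apply continuous_finset_sum
      intro j _
      exact ((hQcont j).comp (continuous_fst.prodMk continuous_snd)).clog
        (fun p => hQslit j (p.1, p.2))
  · intro t s hs
    rw [Complex.exp_add, hL₀e t, Complex.exp_sum]
    have hterm : ∀ j ∈ Finset.range n, Complex.exp (Complex.log (Q j (t, s))) = Q j (t, s) :=
      fun j _ => Complex.exp_log (hQne j (t,s))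
    rw [Finset.prod_congr rfl hterm]
    have hfe : ∀ j : ℕ, W t (min s ((j:ℝ)/n)) ≠ 0 := fun j => hW0 _ _
    have hps := prod_ratio (fun j : ℕ => W t (min s ((j:ℝ)/n))) hfe n
    have hqq : ∏ j ∈ Finset.range n, Q j (t, s)
        = ∏ j ∈ Finset.range n, W t (min s (((j+1:ℕ):ℝ)/n)) / W t (min s ((j:ℝ)/n)) := by
      apply Finset.prod_congr rfl
      intro j _
      rw [hQ]
      norm_num
    rw [hqq, hps]
    simp only [Nat.cast_zero, zero_div]
    rw [show ((n:ℝ))/n = 1 from div_self (ne_of_gt hnpos), min_eq_left hs.2,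
      min_eq_right hs.1, mul_comm]
    exact div_mul_cancel₀ _ (hW0 t 0)

lemma eCyl_mk (p : MobiusDom) : eCyl (Quot.mk cylinderRel p) = eC p := rfl

lemma eCyl_ne (z : OpenCylinder) : eCyl z ≠ 0 := by
  obtain ⟨p, hp⟩ := Quot.exists_rep z
  rw [← hp, eCyl_mk]
  exact eC_ne p

lemma cyl_lift (G : ℝ → OpenCylinder) (hG : Continuous G) (hGfac : ∀ t, G t = G (ρ t)) :
    ∃ A B : ℝ → ℝ, Continuous A ∧ Continuous B ∧ (∀ t, A t = A (ρ t)) ∧ (∀ t, B t = B (ρ t)) ∧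
      (∀ t, B t ∈ Set.Ioo (-1:ℝ) 1) ∧
      (∀ t (h : B t ∈ Set.Ioo (-1:ℝ) 1), G t = Quot.mk cylinderRel ⟨(A t, B t), h⟩) := by
  set u : ℝ → ℂ := fun t => eCyl (G t) with hu
  have hucont : Continuous u := eCyl_cont.comp hG
  have hune : ∀ t, u t ≠ 0 := fun t => eCyl_ne (G t)
  have hufac : ∀ t, u t = u (ρ t) := fun t => by rw [hu]; simp only; rw [hGfac t]
  obtain ⟨L, hLcont, hLe⟩ := lift_sq (fun _ s => u s)
    (hucont.comp continuous_snd) (fun _ s => hune s)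
    (fun t s => (hufac s))
    (fun _ => Complex.log (u 0)) continuous_const
    (fun _ => Complex.exp_log (hune 0))
  set Lg : ℝ → ℂ := fun t => L 0 (ρ t) with hLg
  have hLgcont : Continuous Lg :=
    hLcont.comp ((continuous_const : Continuous fun _ : ℝ => (0:ℝ)).prodMk ρ_cont)
  have hLge : ∀ t, Complex.exp (Lg t) = u t := by
    intro t
    rw [hLg]
    simp only
    rw [hLe 0 (ρ t) (ρ_mem t)]
    exact (hufac t).symm
  refine ⟨fun t => (Lg t).im / Real.pi, fun t => Real.exp ((Lg t).re) - 2,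
    (Complex.continuous_im.comp hLgcont).div_const _,
    (Real.continuous_exp.comp (Complex.continuous_re.comp hLgcont)).sub continuous_const,
    fun t => by simp only [hLg, ρ_ρ], fun t => by simp only [hLg, ρ_ρ], ?_, ?_⟩
  all_goals
    have habs : ∀ t : ℝ, ∃ p : MobiusDom, G t = Quot.mk cylinderRel p ∧
        Real.exp ((Lg t).re) = 2 + p.1.2 := by
      intro t
      obtain ⟨p, hp⟩ := Quot.exists_rep (G t)
      refine ⟨p, hp.symm, ?_⟩
      have h1 : ‖Complex.exp (Lg t)‖ = ‖u t‖ := by rw [hLge t]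
      rw [Complex.norm_exp] at h1
      rw [hu] at h1
      simp only at h1
      rw [← hp, eCyl_mk, eC_abs] at h1
      exact h1
  · intro t
    obtain ⟨p, _, hpe⟩ := habs t
    have h1 := p.2.1
    have h2 := p.2.2
    constructor
    · simp only; linarith [hpe]
    · simp only; linarith [hpe]
  · intro t h
    obtain ⟨p, hp, hpe⟩ := habs t
    rw [hp]
    apply (eC_inj ?_).symm
    show eC _ = eC p
    unfold eC
    simp only
    have hxx : ((((Lg t).im / Real.pi : ℝ)) : ℂ) * Real.pi * Complex.I
        = ((Lg t).im : ℂ) * Complex.I := by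
      push_cast
      rw [div_mul_cancel₀ _ (Complex.ofReal_ne_zero.mpr Real.pi_ne_zero)]
    rw [hxx]
    have h2B : (2 + ((Real.exp ((Lg t).re) - 2 : ℝ) : ℂ)) = ((Real.exp ((Lg t).re) : ℝ) : ℂ) := by
      push_cast; ring
    rw [h2B]
    have : ((Real.exp ((Lg t).re) : ℝ) : ℂ) = Complex.exp (((Lg t).re : ℂ)) := by
      rw [Complex.ofReal_exp]
    rw [this, ← Complex.exp_add]
    have : ((Lg t).re : ℂ) + ((Lg t).im : ℂ) * Complex.I = Lg t := Complex.re_add_im (Lg t)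
    rw [this, hLge t, hu]
    simp only
    rw [hp, eCyl_mk]
    rfl

lemma intval_const {f : ℝ → ℝ} {t₁ t₂ : ℝ} (hf : ContinuousOn f (Set.uIcc t₁ t₂))
    (hint : ∀ t ∈ Set.uIcc t₁ t₂, ∃ z : ℤ, f t = z) : f t₁ = f t₂ := by
  by_contra hne
  obtain ⟨z₁, hz₁⟩ := hint t₁ Set.left_mem_uIcc
  obtain ⟨z₂, hz₂⟩ := hint t₂ Set.right_mem_uIcc
  have hsub := intermediate_value_uIcc hf
  have core : ∀ (w₁ w₂ : ℤ), w₁ < w₂ → ((w₁:ℝ) + 1/2) ∈ Set.uIcc (f t₁) (f t₂) → False := by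
    intro w₁ w₂ hw hc
    obtain ⟨t, htm, ht⟩ := hsub hc
    obtain ⟨z, hz⟩ := hint t htm
    rw [hz] at ht
    have h2 : (2*z : ℤ) = 2*w₁ + 1 := by
      have : (2*z : ℝ) = 2*w₁ + 1 := by
        have := congrArg (fun x => 2*x) ht
        push_cast
        push_cast at this
        linarith
      exact_mod_cast this
    omega
  rcases lt_trichotomy z₁ z₂ with h | h | h
  · refine core z₁ z₂ h ?_
    rw [Set.mem_uIcc]
    left
    have : (z₁:ℝ) + 1 ≤ z₂ := by exact_mod_cast h
    constructor
    · rw [hz₁]; linarith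
    · rw [hz₂]; linarith
  · exact hne (by rw [hz₁, hz₂, h])
  · refine core z₂ z₁ h ?_
    rw [Set.mem_uIcc]
    right
    have : (z₂:ℝ) + 1 ≤ z₁ := by exact_mod_cast h
    constructor
    · rw [hz₂]; linarith
    · rw [hz₁]; linarith

lemma cos_int_mul_pi (n : ℤ) : Real.cos (n * Real.pi) = ((-1:ℝ))^n := by
  rcases Int.even_or_odd n with he | ho
  · obtain ⟨m, hm⟩ := he
    have h1 : ((n:ℤ):ℝ) * Real.pi = (m:ℝ) * (2 * Real.pi) := by
      rw [hm]; push_cast; ring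
    rw [h1, Real.cos_int_mul_two_pi, Even.neg_one_zpow ⟨m, hm⟩]
  · obtain ⟨m, hm⟩ := ho
    have h1 : ((n:ℤ):ℝ) * Real.pi = (m:ℝ) * (2 * Real.pi) + Real.pi := by
      rw [hm]; push_cast; ring
    rw [h1, Real.cos_int_mul_two_pi_add_pi, Odd.neg_one_zpow ⟨m, hm⟩]

end

end MB

set_option maxHeartbeats 1600000

/-- Any two orientation-reversing loops in the open Möbius strip
(loops whose lifts to the orientation double cover join a point to its image under the
nontrivial deck transformation) have intersecting images. -/
theorem orientation_reversing_loops_intersect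
    (γ₀ γ₁ : ℝ → OpenMobius)
    (h₀ : ContinuousOn γ₀ (Set.Icc 0 1)) (h₁ : ContinuousOn γ₁ (Set.Icc 0 1))
    (g₀ g₁ : ℝ → OpenCylinder)
    (hg₀ : ContinuousOn g₀ (Set.Icc 0 1)) (hg₁ : ContinuousOn g₁ (Set.Icc 0 1))
    (hlift₀ : ∀ t ∈ Set.Icc (0:ℝ) 1, mobiusCover (g₀ t) = γ₀ t)
    (hlift₁ : ∀ t ∈ Set.Icc (0:ℝ) 1, mobiusCover (g₁ t) = γ₁ t)
    (hdeck₀ : g₀ 1 = mobiusDeck (g₀ 0)) (hdeck₁ : g₁ 1 = mobiusDeck (g₁ 0)) :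
    (γ₀ '' Set.Icc 0 1 ∩ γ₁ '' Set.Icc 0 1).Nonempty := by
  classical
  by_contra hcon
  set G₀ : ℝ → OpenCylinder := fun t => g₀ (MB.ρ t) with hG₀def
  set G₁ : ℝ → OpenCylinder := fun t => g₁ (MB.ρ t) with hG₁def
  have hG₀c : Continuous G₀ := hg₀.comp_continuous MB.ρ_cont MB.ρ_mem
  have hG₁c : Continuous G₁ := hg₁.comp_continuous MB.ρ_cont MB.ρ_mem
  have hG₀f : ∀ t, G₀ t = G₀ (MB.ρ t) := fun t => by
    rw [hG₀def]; simp only [MB.ρ_ρ]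
  have hG₁f : ∀ t, G₁ t = G₁ (MB.ρ t) := fun t => by
    rw [hG₁def]; simp only [MB.ρ_ρ]
  obtain ⟨A, B, hAc, hBc, hAf, hBf, hBm, hABr⟩ := MB.cyl_lift G₀ hG₀c hG₀f
  obtain ⟨a, b, hac, hbc, haf, hbf, hbm, habr⟩ := MB.cyl_lift G₁ hG₁c hG₁f
  have hγ₀ : ∀ t : ℝ, γ₀ (MB.ρ t) = Quot.mk mobiusRel ⟨(A t, B t), hBm t⟩ := by
    intro t
    rw [← hlift₀ (MB.ρ t) (MB.ρ_mem t)]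
    show mobiusCover (G₀ t) = _
    rw [hABr t (hBm t)]
    rfl
  have hγ₁ : ∀ s : ℝ, γ₁ (MB.ρ s) = Quot.mk mobiusRel ⟨(a s, b s), hbm s⟩ := by
    intro s
    rw [← hlift₁ (MB.ρ s) (MB.ρ_mem s)]
    show mobiusCover (G₁ s) = _
    rw [habr s (hbm s)]
    rfl
  have hdis : ∀ t s : ℝ,
      Quot.mk mobiusRel ⟨(A t, B t), hBm t⟩ ≠ Quot.mk mobiusRel ⟨(a s, b s), hbm s⟩ := by
    intro t s heq
    exact hcon ⟨γ₀ (MB.ρ t), ⟨MB.ρ t, MB.ρ_mem t, rfl⟩,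
      ⟨MB.ρ s, MB.ρ_mem s, by rw [hγ₁ s, ← heq, ← hγ₀ t]⟩⟩
  -- endpoint relations
  have hBneg : -(B 0) ∈ Set.Ioo (-1:ℝ) 1 :=
    ⟨by linarith [(hBm 0).2], by linarith [(hBm 0).1]⟩
  have hbneg : -(b 0) ∈ Set.Ioo (-1:ℝ) 1 :=
    ⟨by linarith [(hbm 0).2], by linarith [(hbm 0).1]⟩
  have hend₀ : Quot.mk cylinderRel ⟨(A 0 + 1, -(B 0)), hBneg⟩
      = Quot.mk cylinderRel ⟨(A 1, B 1), hBm 1⟩ := by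
    rw [← hABr 1 (hBm 1)]
    have : G₀ 1 = mobiusDeck (G₀ 0) := by
      rw [hG₀def]; simp only [MB.ρ_one, MB.ρ_zero]; exact hdeck₀
    rw [this, hABr 0 (hBm 0)]
    rfl
  have hend₁ : Quot.mk cylinderRel ⟨(a 0 + 1, -(b 0)), hbneg⟩
      = Quot.mk cylinderRel ⟨(a 1, b 1), hbm 1⟩ := by
    rw [← habr 1 (hbm 1)]
    have : G₁ 1 = mobiusDeck (G₁ 0) := by
      rw [hG₁def]; simp only [MB.ρ_one, MB.ρ_zero]; exact hdeck₁
    rw [this, habr 0 (hbm 0)]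
    rfl
  obtain ⟨hB10, k₀, hA10⟩ := MB.cyl_exact hend₀
  obtain ⟨hb10, k₁, ha10⟩ := MB.cyl_exact hend₁
  simp only at hB10 hA10 hb10 ha10
  -- the separating function on the square
  obtain ⟨W, hWdef⟩ : ∃ W : ℝ → ℝ → ℂ, W = fun t s =>
      ((Real.sin (Real.pi * (a s - A t)) : ℝ) : ℂ)
        + (((b s : ℝ) : ℂ)
          - ((Real.cos (Real.pi * (a s - A t)) : ℝ) : ℂ) * ((B t : ℝ) : ℂ)) * Complex.I :=
    ⟨_, rfl⟩
  have hWc : Continuous fun p : ℝ × ℝ => W p.1 p.2 := by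
    rw [hWdef]
    apply Continuous.add
    · exact Complex.continuous_ofReal.comp (Real.continuous_sin.comp
        (continuous_const.mul ((hac.comp continuous_snd).sub (hAc.comp continuous_fst))))
    · refine Continuous.mul ?_ continuous_const
      refine Continuous.sub (Complex.continuous_ofReal.comp (hbc.comp continuous_snd)) ?_
      exact (Complex.continuous_ofReal.comp (Real.continuous_cos.comp
          (continuous_const.mul ((hac.comp continuous_snd).sub (hAc.comp continuous_fst))))).mul
        (Complex.continuous_ofReal.comp (hBc.comp continuous_fst))
  have hWre : ∀ t s, (W t s).re = Real.sin (Real.pi * (a s - A t)) := by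
    intro t s
    simp only [hWdef, Complex.add_re, Complex.add_im, Complex.mul_re, Complex.mul_im, Complex.sub_re, Complex.sub_im, Complex.ofReal_re, Complex.ofReal_im, Complex.I_re, Complex.I_im, mul_zero, mul_one, zero_mul, sub_zero, zero_sub, add_zero, zero_add, neg_zero]
  have hWim : ∀ t s, (W t s).im = b s - Real.cos (Real.pi * (a s - A t)) * B t := by
    intro t s
    simp only [hWdef, Complex.add_re, Complex.add_im, Complex.mul_re, Complex.mul_im, Complex.sub_re, Complex.sub_im, Complex.ofReal_re, Complex.ofReal_im, Complex.I_re, Complex.I_im, mul_zero, mul_one, zero_mul, sub_zero, zero_sub, add_zero, zero_add, neg_zero]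
  have hW0 : ∀ t s, W t s ≠ 0 := by
    intro t s h0
    have hre : Real.sin (Real.pi * (a s - A t)) = 0 := by
      rw [← hWre t s, h0, Complex.zero_re]
    have him : b s - Real.cos (Real.pi * (a s - A t)) * B t = 0 := by
      rw [← hWim t s, h0, Complex.zero_im]
    rw [Real.sin_eq_zero_iff] at hre
    obtain ⟨n, hn⟩ := hre
    have hdn : a s - A t = n := by
      have := hn
      rw [mul_comm ((n:ℝ)) Real.pi] at this
      exact (mul_left_cancel₀ Real.pi_ne_zero this).symm
    have hcos : Real.cos (Real.pi * (a s - A t)) = ((-1:ℝ))^n := by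
      rw [hdn, mul_comm, MB.cos_int_mul_pi]
    have hbs : b s = ((-1:ℝ))^n * B t := by rw [hcos] at him; linarith
    have has : a s = A t + n := by linarith
    refine hdis t s ?_
    have hmem2 : ((-1:ℝ))^n * B t ∈ Set.Ioo (-1:ℝ) 1 := MB.neg_one_zpow_mem n (hBm t)
    have step1 : Quot.mk mobiusRel ⟨(a s, b s), hbm s⟩
        = Quot.mk mobiusRel ⟨(A t + n, ((-1:ℝ))^n * B t), hmem2⟩ :=
      congrArg _ (Subtype.ext (Prod.ext has hbs))
    rw [step1, MB.mob_sound n (A t) (B t) (hBm t) hmem2]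
  have hWf : ∀ t s, W t s = W (MB.ρ t) (MB.ρ s) := by
    intro t s
    simp only [hWdef, ← hAf, ← haf, ← hbf, ← hBf]
  -- bottom-edge lift
  obtain ⟨L', hL'c, hL'e⟩ := MB.lift_sq (fun _ s => W s 0)
    (hWc.comp (continuous_snd.prodMk continuous_const))
    (fun _ s => hW0 s 0)
    (fun t s => by show W s 0 = W (MB.ρ s) 0; rw [hWf s 0, MB.ρ_zero])
    (fun _ => Complex.log (W 0 0)) continuous_const
    (fun _ => Complex.exp_log (hW0 0 0))
  set L₀ : ℝ → ℂ := fun t => L' 0 (MB.ρ t) with hL₀def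
  have hL₀c : Continuous L₀ := hL'c.comp (continuous_const.prodMk MB.ρ_cont)
  have hL₀e : ∀ t, Complex.exp (L₀ t) = W t 0 := by
    intro t
    rw [hL₀def]
    simp only
    rw [hL'e 0 (MB.ρ t) (MB.ρ_mem t), hWf t 0, MB.ρ_zero]
  -- square lift
  obtain ⟨L, hLc, hLe⟩ := MB.lift_sq W hWc hW0 hWf L₀ hL₀c hL₀e
  have h0mem : (0:ℝ) ∈ Set.Icc (0:ℝ) 1 := ⟨le_refl 0, zero_le_one⟩
  have h1mem : (1:ℝ) ∈ Set.Icc (0:ℝ) 1 := ⟨zero_le_one, le_refl 1⟩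
  -- edge relations
  have hTop : ∀ t, W t 1 = - W t 0 := by
    intro t
    have hdd : Real.pi * (a 1 - A t)
        = (Real.pi * (a 0 - A t) + Real.pi) + (k₁ : ℝ) * (2*Real.pi) := by
      rw [ha10]; push_cast; ring
    have hdd' : Real.pi * (a 1 - A t)
        = (Real.pi * (a 0 - A t) + Real.pi) + ((k₁ : ℤ) : ℝ) * (2*Real.pi) := hdd
    simp only [hWdef]
    rw [hdd', Real.sin_add_int_mul_two_pi, Real.cos_add_int_mul_two_pi,
      Real.sin_add_pi, Real.cos_add_pi, hb10]
    push_cast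
    ring
  have hRight : ∀ s, W 1 s = -(starRingEnd ℂ) (W 0 s) := by
    intro s
    have hdd' : Real.pi * (a s - A 1)
        = (Real.pi * (a s - A 0) - Real.pi) + ((-k₀ : ℤ) : ℝ) * (2*Real.pi) := by
      rw [hA10]; push_cast; ring
    simp only [hWdef]
    rw [hdd', Real.sin_add_int_mul_two_pi, Real.cos_add_int_mul_two_pi,
      Real.sin_sub_pi, Real.cos_sub_pi, hB10]
    simp only [map_add, map_sub, map_mul, Complex.conj_ofReal, Complex.conj_I]
    push_cast
    ring
  -- monodromy constants
  have hF₀ : ∀ t : ℝ, ∃ z : ℤ,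
      L t 1 - L t 0 = (((2*z+1 : ℤ) : ℝ) : ℂ) * Real.pi * Complex.I := by
    intro t
    have he : Complex.exp (L t 1 - L t 0) = Complex.exp ((Real.pi : ℂ) * Complex.I) := by
      rw [Complex.exp_sub, hLe t 1 h1mem, hLe t 0 h0mem, hTop t, neg_div,
        div_self (hW0 t 0), Complex.exp_pi_mul_I]
    rw [Complex.exp_eq_exp_iff_exists_int] at he
    obtain ⟨z, hz⟩ := he
    exact ⟨z, by rw [hz]; push_cast; ring⟩
  have hF₁ : ∀ s ∈ Set.Icc (0:ℝ) 1, ∃ z : ℤ,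
      L 1 s - (starRingEnd ℂ) (L 0 s)
        = (((2*z+1 : ℤ) : ℝ) : ℂ) * Real.pi * Complex.I := by
    intro s hs
    have hcne : (starRingEnd ℂ) (W 0 s) ≠ 0 := by
      simp only [ne_eq, map_eq_zero]
      exact hW0 0 s
    have he : Complex.exp (L 1 s - (starRingEnd ℂ) (L 0 s))
        = Complex.exp ((Real.pi : ℂ) * Complex.I) := by
      rw [Complex.exp_sub, hLe 1 s hs, Complex.exp_conj, hLe 0 s hs, hRight s, neg_div,
        div_self hcne, Complex.exp_pi_mul_I]
    rw [Complex.exp_eq_exp_iff_exists_int] at he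
    obtain ⟨z, hz⟩ := he
    exact ⟨z, by rw [hz]; push_cast; ring⟩
  have him_form : ∀ (z : ℤ),
      ((((2*z+1 : ℤ) : ℝ) : ℂ) * Real.pi * Complex.I).im / Real.pi = ((2*z+1 : ℤ) : ℝ) := by
    intro z
    simp [Complex.mul_im]
  -- constancy of the two monodromies
  obtain ⟨z00, hz00⟩ := hF₀ 0
  obtain ⟨z01, hz01⟩ := hF₀ 1
  obtain ⟨z10, hz10⟩ := hF₁ 0 h0mem
  obtain ⟨z11, hz11⟩ := hF₁ 1 h1mem
  have hcont0 : Continuous fun t => (L t 1 - L t 0).im / Real.pi :=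
    (Complex.continuous_im.comp ((hLc.comp (continuous_id.prodMk continuous_const)).sub
      (hLc.comp (continuous_id.prodMk continuous_const)))).div_const _
  have hcont1 : Continuous fun s => (L 1 s - (starRingEnd ℂ) (L 0 s)).im / Real.pi :=
    (Complex.continuous_im.comp ((hLc.comp (continuous_const.prodMk continuous_id)).sub
      (Complex.continuous_conj.comp (hLc.comp (continuous_const.prodMk continuous_id))))).div_const _
  have heq0 : z00 = z01 := by
    have h := MB.intval_const (t₁ := (0:ℝ)) (t₂ := 1) hcont0.continuousOn
      (fun t _ => by
        obtain ⟨z, hz⟩ := hF₀ t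
        exact ⟨2*z+1, by rw [hz, him_form z]⟩)
    rw [hz00, hz01, him_form z00, him_form z01] at h
    have : (2*z00+1 : ℝ) = (2*z01+1 : ℝ) := by push_cast at h; linarith
    have : (2*z00+1 : ℤ) = (2*z01+1 : ℤ) := by exact_mod_cast this
    omega
  have heq1 : z10 = z11 := by
    have h := MB.intval_const (t₁ := (0:ℝ)) (t₂ := 1) hcont1.continuousOn
      (fun s hsm => by
        rw [Set.uIcc_of_le zero_le_one] at hsm
        obtain ⟨z, hz⟩ := hF₁ s hsm
        exact ⟨2*z+1, by rw [hz, him_form z]⟩)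
    rw [hz10, hz11, him_form z10, him_form z11] at h
    have : (2*z10+1 : ℝ) = (2*z11+1 : ℝ) := by push_cast at h; linarith
    have : (2*z10+1 : ℤ) = (2*z11+1 : ℤ) := by exact_mod_cast this
    omega
  -- combine at the corners
  have hcomb : L 0 1 - L 0 0 = (starRingEnd ℂ) (L 0 1 - L 0 0) := by
    have e1 : L 1 1 - L 1 0 = L 0 1 - L 0 0 := by
      rw [hz01, hz00, heq0]
    have e2 : L 1 1 - (starRingEnd ℂ) (L 0 1) = L 1 0 - (starRingEnd ℂ) (L 0 0) := by
      rw [hz11, hz10, heq1]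
    rw [map_sub]
    linear_combination e2 - e1
  rw [hz00] at hcomb
  have him := congrArg Complex.im hcomb
  simp only [map_mul, Complex.conj_ofReal, Complex.conj_I, Complex.mul_im, Complex.mul_re,
    Complex.ofReal_re, Complex.ofReal_im, Complex.I_re, Complex.I_im, Complex.neg_im,
    Complex.neg_re, mul_zero, mul_one, zero_mul, sub_zero, zero_sub, add_zero, zero_add,
    mul_neg, neg_zero] at him
  have hpi0 : ((2*z00+1 : ℤ) : ℝ) * Real.pi = 0 := by linarith
  have : ((2*z00+1 : ℤ) : ℝ) = 0 := by
    rcases mul_eq_zero.mp hpi0 with h | h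
    · exact h
    · exact absurd h Real.pi_ne_zero
  have : (2*z00+1 : ℤ) = 0 := by exact_mod_cast this
  omega
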